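/- If f, g ∈ ℂ[x] are both powered, then lcm(f,g) is powered. -/
import Mathlib

theorem stmt11 (f g : Polynomial ℂ)
    (hf : ∀ i : ℕ, 0 < i → f ∣ f.comp (Polynomial.X ^ i))
    (hg : ∀ i : ℕ, 0 < i → g ∣ g.comp (Polynomial.X ^ i)) :
    ∀ i : ℕ, 0 < i → lcm f g ∣ (lcm f g).comp (Polynomial.X ^ i) := by
  intro i hi
  apply lcm_dvd
  · obtain ⟨c, hc⟩ := dvd_lcm_left f g
    exact (hf i hi).trans ⟨c.comp _, by rw [hc, Polynomial.mul_comp]⟩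
  · obtain ⟨c, hc⟩ := dvd_lcm_right f g
    exact (hg i hi).trans ⟨c.comp _, by rw [hc, Polynomial.mul_comp]⟩
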